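/- arXiv:1302.2875 — 4 statements merged into one kernel-verified Lean document; each statement's English description precedes it below -/
import Mathlib

section
/- Let n ∈ ℕ and let J, Λ ∈ Mₙ(ℂ) be constant matrices. Suppose Q, Σ, V : ℝ → Mₙ(ℂ) are differentiable matrix-valued functions satisfying V'(t) = J·V(t)·Λ + Q(t)·V(t) and Σ'(t) = (J·Σ(t) + Q(t))·Σ(t) − Σ(t)·(J·Σ(t) + Q(t)) for all t. Then the matrix function U(t) := V(t)·Λ − Σ(t)·V(t) satisfies U'(t) = J·U(t)·Λ + (Q(t) + J·Σ(t) − Σ(t)·J)·U(t) for all t. -/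
set_option autoImplicit false

private lemma entry_mul_deriv {n : ℕ} {A B : ℝ → Matrix (Fin n) (Fin n) ℂ}
    {A' B' : Matrix (Fin n) (Fin n) ℂ} {t : ℝ}
    (hA : ∀ i j : Fin n, HasDerivAt (fun s => A s i j) (A' i j) t)
    (hB : ∀ i j : Fin n, HasDerivAt (fun s => B s i j) (B' i j) t)
    (i j : Fin n) :
    HasDerivAt (fun s => (A s * B s) i j) ((A' * B t + A t * B') i j) t := by
  have : HasDerivAt (fun s => ∑ k, A s i k * B s k j)
      (∑ k, (A' i k * B t k j + A t i k * B' k j)) t :=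
    HasDerivAt.fun_sum fun k _ => (hA i k).fun_mul (hB k j)
  simpa [Matrix.mul_apply, Matrix.add_apply, Finset.sum_add_distrib] using this

/-- Algebraic core of the Darboux transformation: if `V' = J V Λ + Q V` and
`Σ' = [JΣ + Q, Σ]`, then `U := VΛ − ΣV` satisfies `U' = J U Λ + (Q + [J,Σ]) U`. -/
theorem darboux_transformed_system
    (n : ℕ) (J Λ : Matrix (Fin n) (Fin n) ℂ)
    (Q Sg V : ℝ → Matrix (Fin n) (Fin n) ℂ)
    (hV : ∀ t (i j : Fin n),
      HasDerivAt (fun s => V s i j) ((J * V t * Λ + Q t * V t) i j) t)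
    (hSg : ∀ t (i j : Fin n),
      HasDerivAt (fun s => Sg s i j)
        (((J * Sg t + Q t) * Sg t - Sg t * (J * Sg t + Q t)) i j) t) :
    ∀ t (i j : Fin n),
      HasDerivAt (fun s => (V s * Λ - Sg s * V s) i j)
        ((J * (V t * Λ - Sg t * V t) * Λ
          + (Q t + J * Sg t - Sg t * J) * (V t * Λ - Sg t * V t)) i j) t := by
  intro t i j
  have hΛ : ∀ i j : Fin n, HasDerivAt (fun _ : ℝ => Λ i j) ((0 : Matrix (Fin n) (Fin n) ℂ) i j) t :=
    fun i j => by simpa using hasDerivAt_const t (Λ i j)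
  have h1 := entry_mul_deriv (A := V) (B := fun _ => Λ)
    (A' := J * V t * Λ + Q t * V t) (B' := 0) (hV t) hΛ i j
  have h2 := entry_mul_deriv (A := Sg) (B := V)
    (A' := (J * Sg t + Q t) * Sg t - Sg t * (J * Sg t + Q t))
    (B' := J * V t * Λ + Q t * V t) (hSg t) (hV t) i j
  have h := h1.fun_sub h2
  have key : ((J * V t * Λ + Q t * V t) * Λ + V t * 0)
      - (((J * Sg t + Q t) * Sg t - Sg t * (J * Sg t + Q t)) * V t
          + Sg t * (J * V t * Λ + Q t * V t))
      = J * (V t * Λ - Sg t * V t) * Λ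
          + (Q t + J * Sg t - Sg t * J) * (V t * Λ - Sg t * V t) := by
    noncomm_ring
  rw [← Matrix.sub_apply, key] at h
  simpa [Matrix.sub_apply] using h
end

section
/- Let n ∈ ℕ, let J, Γ ∈ Mₙ(ℂ) be constant matrices, let Q : ℝ → Mₙ(ℂ) be continuous, and let S : ℝ → Mₙ(ℂ) be differentiable with S(t) invertible for every t and satisfying S'(t) = J·S(t)·Γ + Q(t)·S(t). Then Σ(t) := S(t)·Γ·S(t)⁻¹ satisfies Σ'(t) = (J·Σ(t) + Q(t))·Σ(t) − Σ(t)·(J·Σ(t) + Q(t)) for all t. -/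
set_option autoImplicit false

/-- Step in the proof of the Darboux theorem: the dressing matrix `Σ = S Γ S⁻¹`
built from a solution `S` of `S' = J S Γ + Q S` (with `S t` invertible)
satisfies the commutator evolution `Σ' = [JΣ + Q, Σ]`. -/
theorem darboux_dressing_matrix_evolution
    (n : ℕ) (J Γ : Matrix (Fin n) (Fin n) ℂ)
    (Q S : ℝ → Matrix (Fin n) (Fin n) ℂ)
    (hQcont : Continuous Q)
    (hSunit : ∀ t, IsUnit (S t))
    (hS : ∀ t (i j : Fin n),
      HasDerivAt (fun s => S s i j) ((J * S t * Γ + Q t * S t) i j) t) :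
    ∀ t (i j : Fin n),
      HasDerivAt (fun s => (S s * Γ * (S s)⁻¹) i j)
        (((J * (S t * Γ * (S t)⁻¹) + Q t) * (S t * Γ * (S t)⁻¹)
          - (S t * Γ * (S t)⁻¹) * (J * (S t * Γ * (S t)⁻¹) + Q t)) i j) t := by
  letI : NormedRing (Matrix (Fin n) (Fin n) ℂ) := Matrix.linftyOpNormedRing
  letI : NormedAlgebra ℂ (Matrix (Fin n) (Fin n) ℂ) := Matrix.linftyOpNormedAlgebra
  letI : NormedAlgebra ℝ (Matrix (Fin n) (Fin n) ℂ) := Matrix.linftyOpNormedAlgebra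
  intro t i j
  -- matrix-level derivative of S
  have hSmat : HasDerivAt S (J * S t * Γ + Q t * S t) t := by
    have h1 : HasDerivAt (fun s => ∑ p : Fin n, ∑ q : Fin n,
        S s p q • Matrix.single p q (1:ℂ))
        (∑ p : Fin n, ∑ q : Fin n,
          ((J * S t * Γ + Q t * S t) p q) • Matrix.single p q (1:ℂ)) t := by
      refine HasDerivAt.fun_sum fun p _ => HasDerivAt.fun_sum fun q _ => ?_
      exact (hS t p q).smul_const _
    have e1 : ∀ s, (∑ p : Fin n, ∑ q : Fin n,
        S s p q • Matrix.single p q (1:ℂ)) = S s := fun s => by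
      simp only [Matrix.smul_single, smul_eq_mul, mul_one]
      exact (Matrix.matrix_eq_sum_single (S s)).symm
    have e2 : (∑ p : Fin n, ∑ q : Fin n,
        ((J * S t * Γ + Q t * S t) p q) • Matrix.single p q (1:ℂ))
        = J * S t * Γ + Q t * S t := by
      simp only [Matrix.smul_single, smul_eq_mul, mul_one]
      exact (Matrix.matrix_eq_sum_single _).symm
    rw [e2] at h1
    exact h1.congr_deriv rfl |>.congr_of_eventuallyEq (by filter_upwards with s; rw [e1])
  -- derivative of the inverse
  set S' := J * S t * Γ + Q t * S t with hS'def
  obtain ⟨u, hu⟩ := hSunit t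
  have hui : (↑u⁻¹ : Matrix (Fin n) (Fin n) ℂ) = (S t)⁻¹ := by
    rw [Matrix.nonsing_inv_eq_ringInverse, ← hu, Ring.inverse_unit]
  have hInv : HasDerivAt (fun s => (S s)⁻¹) (-((S t)⁻¹ * S' * (S t)⁻¹)) t := by
    have hf := hasFDerivAt_ringInverse (𝕜 := ℝ) u
    rw [hu] at hf
    have h := hf.comp_hasDerivAt t hSmat
    have h2 : HasDerivAt (fun s => Ring.inverse (S s))
        (-((S t)⁻¹ * S' * (S t)⁻¹)) t := by
      have h' := h
      simp [hui] at h'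
      exact h'
    simpa only [← Matrix.nonsing_inv_eq_ringInverse] using h2
  have hSig : HasDerivAt (fun s => S s * Γ * (S s)⁻¹)
      (S' * Γ * (S t)⁻¹ + S t * Γ * -((S t)⁻¹ * S' * (S t)⁻¹)) t :=
    (hSmat.mul_const Γ).mul hInv
  have hmul : S t * (S t)⁻¹ = 1 := Matrix.mul_nonsing_inv _ ((Matrix.isUnit_iff_isUnit_det _).mp ⟨u, hu⟩)
  have hmul' : (S t)⁻¹ * S t = 1 := Matrix.nonsing_inv_mul _ ((Matrix.isUnit_iff_isUnit_det _).mp ⟨u, hu⟩)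
  have halg : S' * Γ * (S t)⁻¹ + S t * Γ * -((S t)⁻¹ * S' * (S t)⁻¹)
      = (J * (S t * Γ * (S t)⁻¹) + Q t) * (S t * Γ * (S t)⁻¹)
        - (S t * Γ * (S t)⁻¹) * (J * (S t * Γ * (S t)⁻¹) + Q t) := by
    have hc1 : ∀ X : Matrix (Fin n) (Fin n) ℂ, (S t)⁻¹ * (S t * X) = X := fun X => by
      rw [← mul_assoc, hmul', one_mul]
    have hc2 : ∀ X : Matrix (Fin n) (Fin n) ℂ, S t * ((S t)⁻¹ * X) = X := fun X => by
      rw [← mul_assoc, hmul, one_mul]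
    rw [hS'def]
    simp only [mul_neg, neg_mul, add_mul, mul_add, sub_eq_add_neg, neg_add, neg_neg,
      mul_assoc, hc1, hc2, hmul, hmul', mul_one, one_mul]
  rw [halg] at hSig
  -- extract the entry
  let Lm : Matrix (Fin n) (Fin n) ℂ →ₗ[ℝ] ℂ :=
    { toFun := fun M => M i j, map_add' := fun _ _ => rfl, map_smul' := fun _ _ => rfl }
  let E : Matrix (Fin n) (Fin n) ℂ →L[ℝ] ℂ := LinearMap.toContinuousLinearMap Lm
  have h := E.hasFDerivAt.comp_hasDerivAt t hSig
  simp [E, Lm, Function.comp, LinearMap.coe_toContinuousLinearMap'] at h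
  exact h
end

section
/- Let q, λ ∈ ℂ and let φ₁, φ₂ ∈ ℂ with D := |φ₁|² + |φ₂|² ≠ 0. Let S = [[φ₁, conj(φ₂)], [φ₂, −conj(φ₁)]], Γ = diag(λ, conj(λ)), Σ = S·Γ·S⁻¹, J = diag(−i, i), and Q = [[0, q], [−conj(q), 0]]. Then the matrix Q̃ := Q + J·Σ − Σ·J has zero diagonal entries, its (1,2) entry equals q̃ := q + 2i(conj(λ) − λ)·φ₁·conj(φ₂)/D, and its (2,1) entry equals −conj(q̃). In particular, the Darboux update preserves the off-diagonal symmetry class of Zakharov-Shabat potential matrices. -/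
set_option autoImplicit false
set_option maxHeartbeats 1000000

/-- The Darboux update `Q̃ = Q + [J, Σ]` with `Σ = S Γ S⁻¹` preserves the
off-diagonal symmetry class of Zakharov-Shabat potential matrices, and its
off-diagonal entry is the signal update
`q̃ = q + 2i(conj λ − λ) φ₁ conj φ₂ / (|φ₁|² + |φ₂|²)`. -/
theorem darboux_potential_update
    (q lam φ1 φ2 : ℂ)
    (hD : ‖φ1‖ ^ 2 + ‖φ2‖ ^ 2 ≠ 0) :
    let S : Matrix (Fin 2) (Fin 2) ℂ :=
      !![φ1, (starRingEnd ℂ) φ2; φ2, -(starRingEnd ℂ) φ1]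
    let Γ : Matrix (Fin 2) (Fin 2) ℂ := !![lam, 0; 0, (starRingEnd ℂ) lam]
    let Sg : Matrix (Fin 2) (Fin 2) ℂ := S * Γ * S⁻¹
    let J : Matrix (Fin 2) (Fin 2) ℂ := !![-Complex.I, 0; 0, Complex.I]
    let Q : Matrix (Fin 2) (Fin 2) ℂ := !![0, q; -(starRingEnd ℂ) q, 0]
    let Qt : Matrix (Fin 2) (Fin 2) ℂ := Q + J * Sg - Sg * J
    let qtil : ℂ := q + 2 * Complex.I * ((starRingEnd ℂ) lam - lam) * φ1 *
      (starRingEnd ℂ) φ2 /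
      (((‖φ1‖ ^ 2 + ‖φ2‖ ^ 2 : ℝ)) : ℂ)
    Qt 0 0 = 0 ∧ Qt 1 1 = 0 ∧ Qt 0 1 = qtil ∧ Qt 1 0 = -(starRingEnd ℂ) qtil := by
  intro S Γ Sg J Q Qt qtil
  set d : ℂ := (((‖φ1‖ ^ 2 + ‖φ2‖ ^ 2 : ℝ)) : ℂ) with hd
  have hdne : d ≠ 0 := by simpa [hd] using Complex.ofReal_ne_zero.mpr hD
  have hsum : φ1 * (starRingEnd ℂ) φ1 + φ2 * (starRingEnd ℂ) φ2 = d := by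
    rw [Complex.mul_conj, Complex.mul_conj, hd]; push_cast [Complex.sq_norm]; ring
  have hSinv : S⁻¹ = !![(starRingEnd ℂ) φ1 / d, (starRingEnd ℂ) φ2 / d;
      φ2 / d, -φ1 / d] := by
    apply Matrix.inv_eq_right_inv
    ext i j
    fin_cases i <;> fin_cases j <;>
      simp [S, Matrix.mul_apply, Fin.sum_univ_two] <;>
      field_simp <;>
      first
        | linear_combination hsum
        | linear_combination -hsum
        | ring
  have hSg : Sg = !![(lam * φ1 * (starRingEnd ℂ) φ1
        + (starRingEnd ℂ) lam * φ2 * (starRingEnd ℂ) φ2) / d,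
      (lam - (starRingEnd ℂ) lam) * φ1 * (starRingEnd ℂ) φ2 / d;
      (lam - (starRingEnd ℂ) lam) * (starRingEnd ℂ) φ1 * φ2 / d,
      (lam * φ2 * (starRingEnd ℂ) φ2
        + (starRingEnd ℂ) lam * φ1 * (starRingEnd ℂ) φ1) / d] := by
    rw [show Sg = S * Γ * S⁻¹ from rfl, hSinv]
    ext i j
    fin_cases i <;> fin_cases j <;>
      simp [S, Γ, Matrix.mul_apply, Fin.sum_univ_two] <;>
      field_simp <;> ring
  have hconjd : (starRingEnd ℂ) d = d := by rw [hd, Complex.conj_ofReal]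
  have hQt : ∀ i j, Qt i j = (Q + J * !![(lam * φ1 * (starRingEnd ℂ) φ1
        + (starRingEnd ℂ) lam * φ2 * (starRingEnd ℂ) φ2) / d,
      (lam - (starRingEnd ℂ) lam) * φ1 * (starRingEnd ℂ) φ2 / d;
      (lam - (starRingEnd ℂ) lam) * (starRingEnd ℂ) φ1 * φ2 / d,
      (lam * φ2 * (starRingEnd ℂ) φ2
        + (starRingEnd ℂ) lam * φ1 * (starRingEnd ℂ) φ1) / d]
      - !![(lam * φ1 * (starRingEnd ℂ) φ1
        + (starRingEnd ℂ) lam * φ2 * (starRingEnd ℂ) φ2) / d,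
      (lam - (starRingEnd ℂ) lam) * φ1 * (starRingEnd ℂ) φ2 / d;
      (lam - (starRingEnd ℂ) lam) * (starRingEnd ℂ) φ1 * φ2 / d,
      (lam * φ2 * (starRingEnd ℂ) φ2
        + (starRingEnd ℂ) lam * φ1 * (starRingEnd ℂ) φ1) / d] * J) i j := by
    intro i j
    rw [show Qt = Q + J * Sg - Sg * J from rfl, hSg]
  refine ⟨?_, ?_, ?_, ?_⟩ <;> rw [hQt] <;>
    simp only [Q, J, qtil, ← hd, Matrix.sub_apply, Matrix.add_apply, Matrix.mul_apply, Matrix.of_apply,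
      Fin.sum_univ_two, Matrix.cons_val_zero, Matrix.cons_val_one,
      Matrix.head_cons, Matrix.head_fin_const, Matrix.cons_val', Matrix.empty_val',
      Matrix.cons_val_fin_one, map_add, map_mul, map_sub, map_div₀, map_neg,
      map_ofNat, Complex.conj_conj, Complex.conj_I, hconjd] <;>
    field_simp <;> ring
end

section
/- Let q : ℝ → ℂ be continuous and λ, μ ∈ ℂ. Suppose φ = (φ₁, φ₂) : ℝ → ℂ² is differentiable, satisfies the Zakharov-Shabat system with parameter λ (φ₁' = −iλφ₁ + qφ₂, φ₂' = −q̄φ₁ + iλφ₂), and D(t) := |φ₁(t)|² + |φ₂(t)|² > 0 for all t. Let S(t) = [[φ₁, conj(φ₂)], [φ₂, −conj(φ₁)]], Σ(t) = S(t)·diag(λ, conj(λ))·S(t)⁻¹, and define the transformed potential q̃(t) := q(t) + 2i(conj(λ) − λ)·φ₁(t)·conj(φ₂(t))/D(t). If v : ℝ → ℂ² is differentiable and satisfies the Zakharov-Shabat system with potential q and parameter μ, then u(t) := (μ·I − Σ(t))·v(t) satisfies the Zakharov-Shabat system with potential q̃ and parameter μ: u₁' = −iμu₁ + q̃u₂,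 u₂' = −conj(q̃)u₁ + iμu₂. -/
set_option autoImplicit false
set_option maxHeartbeats 4000000

private lemma darboux_deriv_aux (c : ℂ) (f1 f2 w0 w1 w2 D : ℝ → ℂ)
    (d1 d2 e0 e1 e2 dD : ℂ) (t : ℝ)
    (hf1 : HasDerivAt f1 d1 t) (hf2 : HasDerivAt f2 d2 t)
    (hw0 : HasDerivAt w0 e0 t)
    (hw1 : HasDerivAt w1 e1 t) (hw2 : HasDerivAt w2 e2 t)
    (hDD : HasDerivAt D dD t) (hne : D t ≠ 0) :
    HasDerivAt (fun s => c * w0 s - (f1 s * w1 s + f2 s * w2 s) / D s)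
      (c * e0 - (((d1 * w1 t + f1 t * e1) + (d2 * w2 t + f2 t * e2)) * D t
        - (f1 t * w1 t + f2 t * w2 t) * dD) / (D t) ^ 2) t :=
  (hw0.const_mul c).sub (((hf1.mul hw1).add (hf2.mul hw2)).div hDD hne)

/-- Darboux transformation for the Zakharov-Shabat system: from an eigenvector
solution `φ` at parameter `λ`, every solution `v` at parameter `μ` is mapped to a
solution `u = (μI − Σ)v` of the Zakharov-Shabat system with the updated potential
`q̃ = q + 2i(conj λ − λ) φ₁ conj φ₂ / (|φ₁|² + |φ₂|²)`. -/
theorem darboux_eigenvector_update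
    (q : ℝ → ℂ) (hq : Continuous q) (lam mu : ℂ) (φ1 φ2 v1 v2 : ℝ → ℂ)
    (hφ1 : ∀ t, HasDerivAt φ1 (-Complex.I * lam * φ1 t + q t * φ2 t) t)
    (hφ2 : ∀ t, HasDerivAt φ2
      (-(starRingEnd ℂ) (q t) * φ1 t + Complex.I * lam * φ2 t) t)
    (hD : ∀ t, 0 < ‖φ1 t‖ ^ 2 + ‖φ2 t‖ ^ 2)
    (hv1 : ∀ t, HasDerivAt v1 (-Complex.I * mu * v1 t + q t * v2 t) t)
    (hv2 : ∀ t, HasDerivAt v2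
      (-(starRingEnd ℂ) (q t) * v1 t + Complex.I * mu * v2 t) t) :
    let S : ℝ → Matrix (Fin 2) (Fin 2) ℂ := fun t =>
      !![φ1 t, (starRingEnd ℂ) (φ2 t); φ2 t, -(starRingEnd ℂ) (φ1 t)]
    let Sg : ℝ → Matrix (Fin 2) (Fin 2) ℂ := fun t =>
      S t * !![lam, 0; 0, (starRingEnd ℂ) lam] * (S t)⁻¹
    let qtil : ℝ → ℂ := fun t =>
      q t + 2 * Complex.I * ((starRingEnd ℂ) lam - lam) * φ1 t *
        (starRingEnd ℂ) (φ2 t) /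
        (((‖φ1 t‖ ^ 2 + ‖φ2 t‖ ^ 2 : ℝ)) : ℂ)
    let u1 : ℝ → ℂ := fun t => mu * v1 t - (Sg t 0 0 * v1 t + Sg t 0 1 * v2 t)
    let u2 : ℝ → ℂ := fun t => mu * v2 t - (Sg t 1 0 * v1 t + Sg t 1 1 * v2 t)
    ∀ t, HasDerivAt u1 (-Complex.I * mu * u1 t + qtil t * u2 t) t
      ∧ HasDerivAt u2
          (-(starRingEnd ℂ) (qtil t) * u1 t + Complex.I * mu * u2 t) t := by
  intro S Sg qtil u1 u2
  have hcast : ∀ t, ((‖φ1 t‖ ^ 2 + ‖φ2 t‖ ^ 2 : ℝ) : ℂ)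
      = φ1 t * (starRingEnd ℂ) (φ1 t) + φ2 t * (starRingEnd ℂ) (φ2 t) := by
    intro t
    push_cast [Complex.sq_norm]
    rw [Complex.mul_conj, Complex.mul_conj]
  have hne : ∀ t, φ1 t * (starRingEnd ℂ) (φ1 t) + φ2 t * (starRingEnd ℂ) (φ2 t) ≠ 0 := by
    intro t
    rw [← hcast t]
    exact_mod_cast (hD t).ne'
  -- derivatives of conjugates
  have hca : ∀ t, HasDerivAt (fun s => (starRingEnd ℂ) (φ1 s))
      ((starRingEnd ℂ) (-Complex.I * lam * φ1 t + q t * φ2 t)) t := fun t => by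
    simpa using (hφ1 t).star
  have hcb : ∀ t, HasDerivAt (fun s => (starRingEnd ℂ) (φ2 s))
      ((starRingEnd ℂ) (-(starRingEnd ℂ) (q t) * φ1 t + Complex.I * lam * φ2 t)) t := fun t => by
    simpa using (hφ2 t).star
  -- inverse of S
  have hSinv : ∀ t, (S t)⁻¹ =
      (φ1 t * (starRingEnd ℂ) (φ1 t) + φ2 t * (starRingEnd ℂ) (φ2 t))⁻¹ •
        !![(starRingEnd ℂ) (φ1 t), (starRingEnd ℂ) (φ2 t); φ2 t, -φ1 t] := by
    intro t
    apply Matrix.inv_eq_right_inv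
    ext i j
    fin_cases i <;> fin_cases j <;>
      simp [S, Matrix.mul_apply, Fin.sum_univ_two, Matrix.one_apply] <;>
      field_simp [hne t] <;> ring
  -- entries of Sg
  have hSg00 : ∀ t, Sg t 0 0 =
      (lam * φ1 t * (starRingEnd ℂ) (φ1 t) + (starRingEnd ℂ) lam * φ2 t * (starRingEnd ℂ) (φ2 t)) /
        (φ1 t * (starRingEnd ℂ) (φ1 t) + φ2 t * (starRingEnd ℂ) (φ2 t)) := by
    intro t
    simp only [Sg, S, hSinv t]
    simp [Matrix.mul_apply, Fin.sum_univ_two, div_eq_mul_inv]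
    ring
  have hSg01 : ∀ t, Sg t 0 1 =
      ((lam - (starRingEnd ℂ) lam) * φ1 t * (starRingEnd ℂ) (φ2 t)) /
        (φ1 t * (starRingEnd ℂ) (φ1 t) + φ2 t * (starRingEnd ℂ) (φ2 t)) := by
    intro t
    simp only [Sg, S, hSinv t]
    simp [Matrix.mul_apply, Fin.sum_univ_two, div_eq_mul_inv]
    ring
  have hSg10 : ∀ t, Sg t 1 0 =
      ((lam - (starRingEnd ℂ) lam) * (starRingEnd ℂ) (φ1 t) * φ2 t) /
        (φ1 t * (starRingEnd ℂ) (φ1 t) + φ2 t * (starRingEnd ℂ) (φ2 t)) := by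
    intro t
    simp only [Sg, S, hSinv t]
    simp [Matrix.mul_apply, Fin.sum_univ_two, div_eq_mul_inv]
    ring
  have hSg11 : ∀ t, Sg t 1 1 =
      ((starRingEnd ℂ) lam * φ1 t * (starRingEnd ℂ) (φ1 t) + lam * φ2 t * (starRingEnd ℂ) (φ2 t)) /
        (φ1 t * (starRingEnd ℂ) (φ1 t) + φ2 t * (starRingEnd ℂ) (φ2 t)) := by
    intro t
    simp only [Sg, S, hSinv t]
    simp [Matrix.mul_apply, Fin.sum_univ_two, div_eq_mul_inv]
    ring
  -- pointwise formulas for u1, u2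
  have hu1 : ∀ t, u1 t = mu * v1 t -
      ((lam * φ1 t * (starRingEnd ℂ) (φ1 t) + (starRingEnd ℂ) lam * φ2 t * (starRingEnd ℂ) (φ2 t)) * v1 t
        + ((lam - (starRingEnd ℂ) lam) * φ1 t * (starRingEnd ℂ) (φ2 t)) * v2 t) /
        (φ1 t * (starRingEnd ℂ) (φ1 t) + φ2 t * (starRingEnd ℂ) (φ2 t)) := by
    intro t
    simp only [u1, hSg00 t, hSg01 t]
    rw [div_mul_eq_mul_div, div_mul_eq_mul_div, ← add_div]
  have hu2 : ∀ t, u2 t = mu * v2 t -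
      (((lam - (starRingEnd ℂ) lam) * (starRingEnd ℂ) (φ1 t) * φ2 t) * v1 t
        + ((starRingEnd ℂ) lam * φ1 t * (starRingEnd ℂ) (φ1 t) + lam * φ2 t * (starRingEnd ℂ) (φ2 t)) * v2 t) /
        (φ1 t * (starRingEnd ℂ) (φ1 t) + φ2 t * (starRingEnd ℂ) (φ2 t)) := by
    intro t
    simp only [u2, hSg10 t, hSg11 t]
    rw [div_mul_eq_mul_div, div_mul_eq_mul_div, ← add_div]
  -- derivative of denominator
  have hDc : ∀ t, HasDerivAt
      (fun s => φ1 s * (starRingEnd ℂ) (φ1 s) + φ2 s * (starRingEnd ℂ) (φ2 s))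
      ((-Complex.I * lam * φ1 t + q t * φ2 t) * (starRingEnd ℂ) (φ1 t)
        + φ1 t * (starRingEnd ℂ) (-Complex.I * lam * φ1 t + q t * φ2 t)
        + ((-(starRingEnd ℂ) (q t) * φ1 t + Complex.I * lam * φ2 t) * (starRingEnd ℂ) (φ2 t)
        + φ2 t * (starRingEnd ℂ) (-(starRingEnd ℂ) (q t) * φ1 t + Complex.I * lam * φ2 t))) t :=
    fun t => ((hφ1 t).mul (hca t)).add ((hφ2 t).mul (hcb t))
  intro t
  constructor
  · -- first component
    have key := darboux_deriv_aux mu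
      (fun s => lam * φ1 s * (starRingEnd ℂ) (φ1 s) + (starRingEnd ℂ) lam * φ2 s * (starRingEnd ℂ) (φ2 s))
      (fun s => (lam - (starRingEnd ℂ) lam) * φ1 s * (starRingEnd ℂ) (φ2 s))
      v1 v1 v2
      (fun s => φ1 s * (starRingEnd ℂ) (φ1 s) + φ2 s * (starRingEnd ℂ) (φ2 s))
      ((lam * (-Complex.I * lam * φ1 t + q t * φ2 t)) * (starRingEnd ℂ) (φ1 t)
        + (lam * φ1 t) * (starRingEnd ℂ) (-Complex.I * lam * φ1 t + q t * φ2 t)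
        + (((starRingEnd ℂ) lam * (-(starRingEnd ℂ) (q t) * φ1 t + Complex.I * lam * φ2 t)) * (starRingEnd ℂ) (φ2 t)
        + ((starRingEnd ℂ) lam * φ2 t) * (starRingEnd ℂ) (-(starRingEnd ℂ) (q t) * φ1 t + Complex.I * lam * φ2 t)))
      (((lam - (starRingEnd ℂ) lam) * (-Complex.I * lam * φ1 t + q t * φ2 t)) * (starRingEnd ℂ) (φ2 t)
        + ((lam - (starRingEnd ℂ) lam) * φ1 t) * (starRingEnd ℂ) (-(starRingEnd ℂ) (q t) * φ1 t + Complex.I * lam * φ2 t))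
      (-Complex.I * mu * v1 t + q t * v2 t)
      (-Complex.I * mu * v1 t + q t * v2 t)
      (-(starRingEnd ℂ) (q t) * v1 t + Complex.I * mu * v2 t)
      ((-Complex.I * lam * φ1 t + q t * φ2 t) * (starRingEnd ℂ) (φ1 t)
        + φ1 t * (starRingEnd ℂ) (-Complex.I * lam * φ1 t + q t * φ2 t)
        + ((-(starRingEnd ℂ) (q t) * φ1 t + Complex.I * lam * φ2 t) * (starRingEnd ℂ) (φ2 t)
        + φ2 t * (starRingEnd ℂ) (-(starRingEnd ℂ) (q t) * φ1 t + Complex.I * lam * φ2 t))) t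
      ((((hφ1 t).const_mul lam).mul (hca t)).add (((hφ2 t).const_mul ((starRingEnd ℂ) lam)).mul (hcb t)))
      (((hφ1 t).const_mul (lam - (starRingEnd ℂ) lam)).mul (hcb t))
      (hv1 t) (hv1 t) (hv2 t) (hDc t) (hne t)
    have hfun : (fun s => mu * v1 s -
        ((lam * φ1 s * (starRingEnd ℂ) (φ1 s) + (starRingEnd ℂ) lam * φ2 s * (starRingEnd ℂ) (φ2 s)) * v1 s
          + ((lam - (starRingEnd ℂ) lam) * φ1 s * (starRingEnd ℂ) (φ2 s)) * v2 s) /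
          (φ1 s * (starRingEnd ℂ) (φ1 s) + φ2 s * (starRingEnd ℂ) (φ2 s))) = u1 := by
      funext s; rw [hu1 s]
    rw [hfun] at key
    convert key using 1
    rw [hu1 t, hu2 t]
    simp only [qtil, hcast t]
    simp only [map_add, map_mul, map_sub, map_neg, Complex.conj_conj, Complex.conj_I]
    field_simp [hne t]
    ring
  · -- second component
    have key := darboux_deriv_aux mu
      (fun s => (lam - (starRingEnd ℂ) lam) * (starRingEnd ℂ) (φ1 s) * φ2 s)
      (fun s => (starRingEnd ℂ) lam * φ1 s * (starRingEnd ℂ) (φ1 s) + lam * φ2 s * (starRingEnd ℂ) (φ2 s))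
      v2 v1 v2
      (fun s => φ1 s * (starRingEnd ℂ) (φ1 s) + φ2 s * (starRingEnd ℂ) (φ2 s))
      (((lam - (starRingEnd ℂ) lam) * (starRingEnd ℂ) (-Complex.I * lam * φ1 t + q t * φ2 t)) * φ2 t
        + ((lam - (starRingEnd ℂ) lam) * (starRingEnd ℂ) (φ1 t)) * (-(starRingEnd ℂ) (q t) * φ1 t + Complex.I * lam * φ2 t))
      (((starRingEnd ℂ) lam * (-Complex.I * lam * φ1 t + q t * φ2 t)) * (starRingEnd ℂ) (φ1 t)
        + ((starRingEnd ℂ) lam * φ1 t) * (starRingEnd ℂ) (-Complex.I * lam * φ1 t + q t * φ2 t)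
        + ((lam * (-(starRingEnd ℂ) (q t) * φ1 t + Complex.I * lam * φ2 t)) * (starRingEnd ℂ) (φ2 t)
        + (lam * φ2 t) * (starRingEnd ℂ) (-(starRingEnd ℂ) (q t) * φ1 t + Complex.I * lam * φ2 t)))
      (-(starRingEnd ℂ) (q t) * v1 t + Complex.I * mu * v2 t)
      (-Complex.I * mu * v1 t + q t * v2 t)
      (-(starRingEnd ℂ) (q t) * v1 t + Complex.I * mu * v2 t)
      ((-Complex.I * lam * φ1 t + q t * φ2 t) * (starRingEnd ℂ) (φ1 t)
        + φ1 t * (starRingEnd ℂ) (-Complex.I * lam * φ1 t + q t * φ2 t)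
        + ((-(starRingEnd ℂ) (q t) * φ1 t + Complex.I * lam * φ2 t) * (starRingEnd ℂ) (φ2 t)
        + φ2 t * (starRingEnd ℂ) (-(starRingEnd ℂ) (q t) * φ1 t + Complex.I * lam * φ2 t))) t
      ((((hca t).const_mul (lam - (starRingEnd ℂ) lam)).mul (hφ2 t)))
      ((((hφ1 t).const_mul ((starRingEnd ℂ) lam)).mul (hca t)).add (((hφ2 t).const_mul lam).mul (hcb t)))
      (hv2 t) (hv1 t) (hv2 t) (hDc t) (hne t)
    refine HasDerivAt.congr_of_eventuallyEq ?_ (Filter.Eventually.of_forall fun s => hu2 s)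
    convert key using 1
    case e'_4 => rfl
    rw [hu1 t, hu2 t]
    simp only [qtil, hcast t]
    simp only [map_add, map_mul, map_sub, map_neg, map_div₀, map_ofNat,
      Complex.conj_conj, Complex.conj_I]
    rw [show (starRingEnd ℂ) (φ1 t) * φ1 t + (starRingEnd ℂ) (φ2 t) * φ2 t
        = φ1 t * (starRingEnd ℂ) (φ1 t) + φ2 t * (starRingEnd ℂ) (φ2 t) from by ring]
    field_simp [hne t, show (starRingEnd ℂ) (φ1 t) * φ1 t + φ2 t * (starRingEnd ℂ) (φ2 t) ≠ 0 from by
      rw [mul_comm]; exact hne t]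
    ring
end
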